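/- Let Z and Z' be 2-tails of a nodal curve C such that Z ∧ Z' is nonempty and Z ∪ Z' ≠ C. Then Z ∧ Z' and Z ∪ Z' are both 2-tails of C. -/

import Mathlib

open Set

/- Dual multigraph model of a nodal curve: vertices `V` are irreducible
components, edges `E` are nodes, with endpoint maps `s t : E → V`. -/

/-- The set of terminal points (edges of the cut) of a vertex subset `Z`. -/
def TermPts {V E : Type} (s t : E → V) (Z : Set V) : Set E :=
  {e | (s e ∈ Z ∧ t e ∉ Z) ∨ (t e ∈ Z ∧ s e ∉ Z)}

/-- A subcurve is a nonempty proper subset of the components. -/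
def Subcurve {V : Type} (Z : Set V) : Prop := Z.Nonempty ∧ Z ≠ Set.univ

/-- Connectivity of the induced sub-multigraph on `Z`. -/
def ConnOn {V E : Type} (s t : E → V) (Z : Set V) : Prop :=
  ∀ x ∈ Z, ∀ y ∈ Z,
    Relation.ReflTransGen
      (fun a b => a ∈ Z ∧ b ∈ Z ∧ ∃ e, (s e = a ∧ t e = b) ∨ (s e = b ∧ t e = a)) x y

/-- A tail is a subcurve with both sides connected. -/
def IsTail {V E : Type} (s t : E → V) (Z : Set V) : Prop :=
  Subcurve Z ∧ ConnOn s t Z ∧ ConnOn s t Zᶜ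

/-- `k_Z`, the number of terminal points of `Z`. -/
noncomputable def kcut {V E : Type} (s t : E → V) (Z : Set V) : ℕ :=
  (TermPts s t Z).ncard

/-- The pair `(Z, Z')` is free if the edge cuts are disjoint. -/
def FreePair {V E : Type} (s t : E → V) (Z Z' : Set V) : Prop :=
  TermPts s t Z ∩ TermPts s t Z' = ∅

/-- The pair `(Z, Z')` is perfect. -/
def PerfectPair {V : Type} (Z Z' : Set V) : Prop :=
  Z ⊆ Z' ∨ Z' ⊆ Z ∨ Zᶜ ⊆ Z' ∨ Z' ⊆ Zᶜ

section AuxLemmas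

variable {V E : Type} (s t : E → V)

/-- The step relation used in `ConnOn`. -/
private def GRel (A : Set V) (a b : V) : Prop :=
  a ∈ A ∧ b ∈ A ∧ ∃ e, (s e = a ∧ t e = b) ∨ (s e = b ∧ t e = a)

private lemma grel_symm (A : Set V) : Symmetric (GRel s t A) := by
  rintro a b ⟨ha, hb, e, he⟩
  exact ⟨hb, ha, e, he.symm⟩

private lemma rtg_mono {A B : Set V} (h : A ⊆ B) {x y : V} :
    Relation.ReflTransGen (GRel s t A) x y → Relation.ReflTransGen (GRel s t B) x y :=
  fun hr => Relation.ReflTransGen.mono (r := GRel s t A) (p := GRel s t B)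
    (fun a b (hab : GRel s t A a b) => (⟨h hab.1, h hab.2.1, hab.2.2⟩ : GRel s t B a b)) x y hr

/-- Gluing lemma: union of two connected sets joined by an edge is connected. -/
private lemma connOn_union {A B : Set V} (hA : ConnOn s t A) (hB : ConnOn s t B) (e : E)
    (he : (s e ∈ A ∧ t e ∈ B) ∨ (t e ∈ A ∧ s e ∈ B)) : ConnOn s t (A ∪ B) := by
  obtain ⟨u, v, hu, hv, hedge⟩ : ∃ u v, u ∈ A ∧ v ∈ B ∧ GRel s t (A ∪ B) u v := by
    rcases he with ⟨h1, h2⟩ | ⟨h1, h2⟩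
    · exact ⟨s e, t e, h1, h2, Or.inl h1, Or.inr h2, e, Or.inl ⟨rfl, rfl⟩⟩
    · exact ⟨t e, s e, h1, h2, Or.inl h1, Or.inr h2, e, Or.inr ⟨rfl, rfl⟩⟩
  have reach : ∀ x ∈ A ∪ B, Relation.ReflTransGen (GRel s t (A ∪ B)) x u := by
    rintro x (hx | hx)
    · exact rtg_mono s t Set.subset_union_left (hA x hx u hu)
    · exact (rtg_mono s t Set.subset_union_right (hB x hx v hv)).trans
        (Relation.ReflTransGen.single (grel_symm s t _ hedge))
  intro x hx y hy
  exact (reach x hx).trans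
    (haveI : Std.Symm (GRel s t (A ∪ B)) := ⟨fun a b hab => grel_symm s t (A ∪ B) hab⟩;
      (Relation.ReflTransGen.symmetric (r := GRel s t (A ∪ B))).symm _ _ (reach y hy))

/-- Splitting lemma: if `A ∪ B` is connected, `A` and `B` are disjoint, and the unique
edge between `A` and `B` is `e0`, then `A` is connected. -/
private lemma connOn_split {A B : Set V} (hd : ∀ x ∈ A, x ∉ B)
    (hW : ConnOn s t (A ∪ B)) (e0 : E)
    (hcross : ∀ e, ((s e ∈ A ∧ t e ∈ B) ∨ (t e ∈ A ∧ s e ∈ B)) → e = e0)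
    (he0 : (s e0 ∈ A ∧ t e0 ∈ B) ∨ (t e0 ∈ A ∧ s e0 ∈ B)) : ConnOn s t A := by
  classical
  obtain ⟨u0, hu0, hcross'⟩ : ∃ u0 ∈ A, ∀ e,
      ((s e ∈ A ∧ t e ∈ B) ∨ (t e ∈ A ∧ s e ∈ B)) →
      (s e ∈ A → s e = u0) ∧ (t e ∈ A → t e = u0) := by
    rcases he0 with ⟨h1, h2⟩ | ⟨h1, h2⟩
    · refine ⟨s e0, h1, fun e he => ?_⟩
      have := hcross e he; subst this
      exact ⟨fun _ => rfl, fun h => absurd h2 (hd _ h)⟩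
    · refine ⟨t e0, h1, fun e he => ?_⟩
      have := hcross e he; subst this
      exact ⟨fun h => absurd h2 (hd _ h), fun _ => rfl⟩
  intro x hx y hy
  have h := hW x (Or.inl hx) y (Or.inl hy)
  have key : ∀ z, Relation.ReflTransGen (GRel s t (A ∪ B)) x z →
      (z ∈ A ∧ Relation.ReflTransGen (GRel s t A) x z) ∨
      (z ∈ B ∧ Relation.ReflTransGen (GRel s t A) x u0) := by
    intro z hz
    induction hz with
    | refl => exact Or.inl ⟨hx, Relation.ReflTransGen.refl⟩
    | @tail b c hxb hbc ih =>
      obtain ⟨hbW, hcW, e, he⟩ := hbc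
      rcases ih with ⟨hbA, p⟩ | ⟨hbB, p⟩
      · by_cases hcA : c ∈ A
        · exact Or.inl ⟨hcA, p.tail ⟨hbA, hcA, e, he⟩⟩
        · have hcB : c ∈ B := hcW.resolve_left hcA
          rcases he with ⟨h1, h2⟩ | ⟨h1, h2⟩
          · have := (hcross' e (Or.inl ⟨h1 ▸ hbA, h2 ▸ hcB⟩)).1 (h1 ▸ hbA)
            exact Or.inr ⟨hcB, (h1 ▸ this : b = u0) ▸ p⟩
          · have := (hcross' e (Or.inr ⟨h2 ▸ hbA, h1 ▸ hcB⟩)).2 (h2 ▸ hbA)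
            exact Or.inr ⟨hcB, (h2 ▸ this : b = u0) ▸ p⟩
      · by_cases hcA : c ∈ A
        · rcases he with ⟨h1, h2⟩ | ⟨h1, h2⟩
          · have := (hcross' e (Or.inr ⟨h2 ▸ hcA, h1 ▸ hbB⟩)).2 (h2 ▸ hcA)
            exact Or.inl ⟨hcA, (h2 ▸ this : c = u0) ▸ p⟩
          · have := (hcross' e (Or.inl ⟨h1 ▸ hcA, h2 ▸ hbB⟩)).1 (h1 ▸ hcA)
            exact Or.inl ⟨hcA, (h1 ▸ this : c = u0) ▸ p⟩
        · exact Or.inr ⟨hcW.resolve_left hcA, p⟩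
  rcases key y h with ⟨_, p⟩ | ⟨hyB, _⟩
  · exact p
  · exact absurd hyB (hd y hy)

/-- Crossing-edge existence: a connected set with a nonempty proper piece has a crossing edge. -/
private lemma cross_nonempty {W A : Set V} (hW : ConnOn s t W) (hAW : A ⊆ W)
    {x y : V} (hx : x ∈ A) (hy : y ∈ W) (hyA : y ∉ A) :
    ∃ e, (s e ∈ A ∧ t e ∈ W ∧ t e ∉ A) ∨ (t e ∈ A ∧ s e ∈ W ∧ s e ∉ A) := by
  classical
  have h := hW x (hAW hx) y hy
  have key : ∀ z, Relation.ReflTransGen (GRel s t W) x z →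
      z ∈ A ∨ ∃ e, (s e ∈ A ∧ t e ∈ W ∧ t e ∉ A) ∨ (t e ∈ A ∧ s e ∈ W ∧ s e ∉ A) := by
    intro z hz
    induction hz with
    | refl => exact Or.inl hx
    | @tail b c hxb hbc ih =>
      rcases ih with hbA | hgoal
      · by_cases hcA : c ∈ A
        · exact Or.inl hcA
        · obtain ⟨hbW, hcW, e, he⟩ := hbc
          rcases he with ⟨h1, h2⟩ | ⟨h1, h2⟩
          · exact Or.inr ⟨e, Or.inl ⟨h1 ▸ hbA, h2 ▸ hcW, h2 ▸ hcA⟩⟩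
          · exact Or.inr ⟨e, Or.inr ⟨h2 ▸ hbA, h1 ▸ hcW, h1 ▸ hcA⟩⟩
      · exact Or.inr hgoal
  rcases key y h with hyA' | hgoal
  · exact absurd hyA' hyA
  · exact hgoal

/-- Edges lying inside `A` which cross the cut of `W`. -/
private def CrossIn (A W : Set V) : Set E :=
  {e | e ∈ TermPts s t W ∧ s e ∈ A ∧ t e ∈ A}

private lemma memCrossIn (A W : Set V) (e : E) :
    e ∈ CrossIn s t A W ↔
      ((s e ∈ W ∧ t e ∉ W) ∨ (t e ∈ W ∧ s e ∉ W)) ∧ s e ∈ A ∧ t e ∈ A := by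
  simp [CrossIn, TermPts, Set.mem_setOf_eq]

/-- Partition of the cut of `W` according to a second set `A`. -/
private lemma termpts_partition (A W : Set V) :
    TermPts s t W = CrossIn s t A W ∪ (TermPts s t W ∩ TermPts s t A) ∪ CrossIn s t Aᶜ W := by
  ext e
  simp only [CrossIn, TermPts, Set.mem_setOf_eq, Set.mem_union, Set.mem_inter_iff,
    Set.mem_compl_iff]
  tauto

private lemma kcut_eq_sum [Finite E] (A W : Set V) :
    kcut s t W = (CrossIn s t A W).ncard + (TermPts s t W ∩ TermPts s t A).ncard
      + (CrossIn s t Aᶜ W).ncard := by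
  have hd1 : Disjoint (CrossIn s t A W) (TermPts s t W ∩ TermPts s t A) := by
    rw [Set.disjoint_left]
    intro e he1 he2
    simp only [CrossIn, TermPts, Set.mem_setOf_eq, Set.mem_inter_iff] at he1 he2
    tauto
  have hd2 : Disjoint (CrossIn s t A W ∪ TermPts s t W ∩ TermPts s t A)
      (CrossIn s t Aᶜ W) := by
    rw [Set.disjoint_left]
    intro e he1 he2
    simp only [CrossIn, TermPts, Set.mem_setOf_eq, Set.mem_union, Set.mem_inter_iff,
      Set.mem_compl_iff] at he1 he2
    tauto
  rw [kcut]
  conv_lhs => rw [termpts_partition s t A W]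
  rw [Set.ncard_union_eq hd2, Set.ncard_union_eq hd1]


private lemma disj_cross (A B C : Set V) :
    Disjoint (CrossIn s t A B) (CrossIn s t B C) := by
  rw [Set.disjoint_left]
  intro e he1 he2
  simp only [CrossIn, TermPts, Set.mem_setOf_eq] at he1 he2
  tauto

private lemma disj_cross' (A B C : Set V) :
    Disjoint (CrossIn s t A B) (CrossIn s t Bᶜ C) := by
  rw [Set.disjoint_left]
  intro e he1 he2
  simp only [CrossIn, TermPts, Set.mem_setOf_eq, Set.mem_compl_iff] at he1 he2
  tauto

private lemma termpts_inter_eq (Z Z' : Set V)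
    (hI : ∀ e, ¬(e ∈ TermPts s t Z ∧ e ∈ TermPts s t Z')) :
    TermPts s t (Z ∩ Z') = CrossIn s t Z Z' ∪ CrossIn s t Z' Z := by
  ext e
  have hIe := hI e
  simp only [CrossIn, TermPts, Set.mem_setOf_eq, Set.mem_union, Set.mem_inter_iff] at hIe ⊢
  tauto

private lemma termpts_union_eq (Z Z' : Set V)
    (hI : ∀ e, ¬(e ∈ TermPts s t Z ∧ e ∈ TermPts s t Z')) :
    TermPts s t (Z ∪ Z') = CrossIn s t Z'ᶜ Z ∪ CrossIn s t Zᶜ Z' := by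
  ext e
  have hIe := hI e
  simp only [CrossIn, TermPts, Set.mem_setOf_eq, Set.mem_union, Set.mem_inter_iff,
    Set.mem_compl_iff] at hIe ⊢
  tauto

end AuxLemmas

set_option maxHeartbeats 1600000 in
/-- Proposition 4.1: if `Z, Z'` are 2-tails with `Z ∧ Z'` nonempty and
`Z ∪ Z' ≠ C`, then `Z ∧ Z'` and `Z ∪ Z'` are 2-tails. -/
theorem stmt_9 {V E : Type} [Fintype V] [Fintype E] (s t : E → V)
    (hC : ConnOn s t Set.univ) (Z Z' : Set V)
    (hZ : IsTail s t Z) (hZ' : IsTail s t Z')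
    (hkZ : kcut s t Z = 2) (hkZ' : kcut s t Z' = 2)
    (hne : (Z ∩ Z').Nonempty) (hun : Z ∪ Z' ≠ Set.univ) :
    (IsTail s t (Z ∩ Z') ∧ kcut s t (Z ∩ Z') = 2) ∧
    (IsTail s t (Z ∪ Z') ∧ kcut s t (Z ∪ Z') = 2) := by
  classical
  by_cases hZZ' : Z ⊆ Z'
  · rw [Set.inter_eq_left.mpr hZZ', Set.union_eq_right.mpr hZZ']
    exact ⟨⟨hZ, hkZ⟩, hZ', hkZ'⟩
  by_cases hZ'Z : Z' ⊆ Z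
  · rw [Set.inter_eq_right.mpr hZ'Z, Set.union_eq_left.mpr hZ'Z]
    exact ⟨⟨hZ', hkZ'⟩, hZ, hkZ⟩
  obtain ⟨⟨hZne, hZnu⟩, hZconn, hZcconn⟩ := hZ
  obtain ⟨⟨hZ'ne, hZ'nu⟩, hZ'conn, hZ'cconn⟩ := hZ'
  -- the four quadrants are nonempty
  obtain ⟨p1, hp1Z, hp1Z'⟩ := hne
  obtain ⟨p2, hp2Z, hp2Z'⟩ := Set.not_subset.mp hZZ'
  obtain ⟨p3, hp3Z', hp3Z⟩ := Set.not_subset.mp hZ'Z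
  obtain ⟨p4, hp4Z, hp4Z'⟩ : (Zᶜ ∩ Z'ᶜ).Nonempty := by
    rw [← Set.compl_union]; exact Set.nonempty_compl.mpr hun
  rw [Set.mem_compl_iff] at hp4Z hp4Z'
  -- the four quadrant cuts are nonempty
  have hAne : ∃ e, e ∈ CrossIn s t Z Z' := by
    obtain ⟨e, he⟩ := cross_nonempty s t hZconn Set.inter_subset_left
      (⟨hp1Z, hp1Z'⟩ : p1 ∈ Z ∩ Z') hp2Z (fun h => hp2Z' h.2)
    refine ⟨e, (memCrossIn s t Z Z' e).mpr ?_⟩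
    simp only [Set.mem_inter_iff] at he
    rcases he with ⟨⟨h1, h2⟩, h3, h4⟩ | ⟨⟨h1, h2⟩, h3, h4⟩
    · exact ⟨Or.inl ⟨h2, fun h => h4 ⟨h3, h⟩⟩, h1, h3⟩
    · exact ⟨Or.inr ⟨h2, fun h => h4 ⟨h3, h⟩⟩, h3, h1⟩
  have hBne : ∃ e, e ∈ CrossIn s t Z' Z := by
    obtain ⟨e, he⟩ := cross_nonempty s t hZ'conn Set.inter_subset_right
      (⟨hp1Z, hp1Z'⟩ : p1 ∈ Z ∩ Z') hp3Z' (fun h => hp3Z h.1)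
    refine ⟨e, (memCrossIn s t Z' Z e).mpr ?_⟩
    simp only [Set.mem_inter_iff] at he
    rcases he with ⟨⟨h1, h2⟩, h3, h4⟩ | ⟨⟨h1, h2⟩, h3, h4⟩
    · exact ⟨Or.inl ⟨h1, fun h => h4 ⟨h, h3⟩⟩, h2, h3⟩
    · exact ⟨Or.inr ⟨h1, fun h => h4 ⟨h, h3⟩⟩, h3, h2⟩
  have hEne : ∃ e, e ∈ CrossIn s t Z'ᶜ Z := by
    obtain ⟨e, he⟩ := cross_nonempty s t hZ'cconn (Set.inter_subset_left : Z'ᶜ ∩ Z ⊆ Z'ᶜ)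
      (⟨hp2Z', hp2Z⟩ : p2 ∈ Z'ᶜ ∩ Z) (hp4Z' : p4 ∈ Z'ᶜ) (fun h => hp4Z h.2)
    refine ⟨e, (memCrossIn s t Z'ᶜ Z e).mpr ?_⟩
    simp only [Set.mem_inter_iff, Set.mem_compl_iff] at he
    rcases he with ⟨⟨h1, h2⟩, h3, h4⟩ | ⟨⟨h1, h2⟩, h3, h4⟩
    · exact ⟨Or.inl ⟨h2, fun h => h4 ⟨h3, h⟩⟩, h1, h3⟩
    · exact ⟨Or.inr ⟨h2, fun h => h4 ⟨h3, h⟩⟩, h3, h1⟩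
  have hFne : ∃ e, e ∈ CrossIn s t Zᶜ Z' := by
    obtain ⟨e, he⟩ := cross_nonempty s t hZcconn (Set.inter_subset_left : Zᶜ ∩ Z' ⊆ Zᶜ)
      (⟨hp3Z, hp3Z'⟩ : p3 ∈ Zᶜ ∩ Z') (hp4Z : p4 ∈ Zᶜ) (fun h => hp4Z' h.2)
    refine ⟨e, (memCrossIn s t Zᶜ Z' e).mpr ?_⟩
    simp only [Set.mem_inter_iff, Set.mem_compl_iff] at he
    rcases he with ⟨⟨h1, h2⟩, h3, h4⟩ | ⟨⟨h1, h2⟩, h3, h4⟩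
    · exact ⟨Or.inl ⟨h2, fun h => h4 ⟨h3, h⟩⟩, h1, h3⟩
    · exact ⟨Or.inr ⟨h2, fun h => h4 ⟨h3, h⟩⟩, h3, h1⟩
  -- counting
  have hsum1 := kcut_eq_sum s t Z' Z
  have hsum2 := kcut_eq_sum s t Z Z'
  rw [hkZ] at hsum1
  rw [hkZ'] at hsum2
  have hIcomm : TermPts s t Z' ∩ TermPts s t Z = TermPts s t Z ∩ TermPts s t Z' :=
    Set.inter_comm _ _
  rw [hIcomm] at hsum2
  have hApos : 1 ≤ (CrossIn s t Z Z').ncard :=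
    (Set.ncard_pos (Set.toFinite _)).mpr hAne
  have hBpos : 1 ≤ (CrossIn s t Z' Z).ncard :=
    (Set.ncard_pos (Set.toFinite _)).mpr hBne
  have hEpos : 1 ≤ (CrossIn s t Z'ᶜ Z).ncard :=
    (Set.ncard_pos (Set.toFinite _)).mpr hEne
  have hFpos : 1 ≤ (CrossIn s t Zᶜ Z').ncard :=
    (Set.ncard_pos (Set.toFinite _)).mpr hFne
  have hA1 : (CrossIn s t Z Z').ncard = 1 := by omega
  have hB1 : (CrossIn s t Z' Z).ncard = 1 := by omega
  have hE1 : (CrossIn s t Z'ᶜ Z).ncard = 1 := by omega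
  have hF1 : (CrossIn s t Zᶜ Z').ncard = 1 := by omega
  have hI0 : (TermPts s t Z ∩ TermPts s t Z').ncard = 0 := by omega
  have hIempty : TermPts s t Z ∩ TermPts s t Z' = ∅ :=
    (Set.ncard_eq_zero (Set.toFinite _)).mp hI0
  have hI : ∀ e, ¬(e ∈ TermPts s t Z ∧ e ∈ TermPts s t Z') := by
    intro e he
    exact Set.eq_empty_iff_forall_notMem.mp hIempty e (Set.mem_inter he.1 he.2)
  obtain ⟨eb, heb⟩ := Set.ncard_eq_one.mp hB1
  obtain ⟨ef, hef⟩ := Set.ncard_eq_one.mp hF1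
  have hebM : eb ∈ CrossIn s t Z' Z := by rw [heb]; exact Set.mem_singleton eb
  have hefM : ef ∈ CrossIn s t Zᶜ Z' := by rw [hef]; exact Set.mem_singleton ef
  rw [memCrossIn] at hebM hefM
  obtain ⟨hebOr, hebS, hebT⟩ := hebM
  obtain ⟨hefOr, hefS, hefT⟩ := hefM
  rw [Set.mem_compl_iff] at hefS hefT
  -- cut computations for intersection and union
  have hkInter : kcut s t (Z ∩ Z') = 2 := by
    rw [kcut, termpts_inter_eq s t Z Z' hI,
      Set.ncard_union_eq (disj_cross s t Z Z' Z), hA1, hB1]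
  have hkUnion : kcut s t (Z ∪ Z') = 2 := by
    rw [kcut, termpts_union_eq s t Z Z' hI,
      Set.ncard_union_eq (disj_cross' s t Z'ᶜ Z Z'), hE1, hF1]
  -- connectivity: pieces
  have hdisj1 : ∀ x ∈ Z ∩ Z', x ∉ Zᶜ ∩ Z' := fun x hx hx' => hx'.1 hx.1
  have hsetZ' : (Z ∩ Z') ∪ (Zᶜ ∩ Z') = Z' := by
    ext x; by_cases hx : x ∈ Z <;> simp [hx]
  have hcrossB : ∀ e, ((s e ∈ Z ∩ Z' ∧ t e ∈ Zᶜ ∩ Z') ∨ (t e ∈ Z ∩ Z' ∧ s e ∈ Zᶜ ∩ Z')) →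
      e = eb := by
    intro e he
    rw [← Set.mem_singleton_iff, ← heb, memCrossIn]
    simp only [Set.mem_inter_iff, Set.mem_compl_iff] at he
    rcases he with ⟨⟨h1, h2⟩, h3, h4⟩ | ⟨⟨h1, h2⟩, h3, h4⟩
    · exact ⟨Or.inl ⟨h1, h3⟩, h2, h4⟩
    · exact ⟨Or.inr ⟨h1, h3⟩, h4, h2⟩
  have hcrossB0 : (s eb ∈ Z ∩ Z' ∧ t eb ∈ Zᶜ ∩ Z') ∨ (t eb ∈ Z ∩ Z' ∧ s eb ∈ Zᶜ ∩ Z') := by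
    rcases hebOr with ⟨h1, h2⟩ | ⟨h1, h2⟩
    · exact Or.inl ⟨⟨h1, hebS⟩, h2, hebT⟩
    · exact Or.inr ⟨⟨h1, hebT⟩, h2, hebS⟩
  have hconnInter : ConnOn s t (Z ∩ Z') := by
    refine connOn_split s t hdisj1 ?_ eb hcrossB hcrossB0
    rw [hsetZ']; exact hZ'conn
  have hdisj2 : ∀ x ∈ Zᶜ ∩ Z', x ∉ Zᶜ ∩ Z'ᶜ := fun x hx hx' => hx'.2 hx.2
  have hdisj2' : ∀ x ∈ Zᶜ ∩ Z'ᶜ, x ∉ Zᶜ ∩ Z' := fun x hx hx' => hx.2 hx'.2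
  have hsetZc : (Zᶜ ∩ Z') ∪ (Zᶜ ∩ Z'ᶜ) = Zᶜ := by
    ext x; by_cases hx : x ∈ Z' <;> simp [hx]
  have hsetZc' : (Zᶜ ∩ Z'ᶜ) ∪ (Zᶜ ∩ Z') = Zᶜ := by
    rw [Set.union_comm]; exact hsetZc
  have hcrossF : ∀ e, ((s e ∈ Zᶜ ∩ Z' ∧ t e ∈ Zᶜ ∩ Z'ᶜ) ∨ (t e ∈ Zᶜ ∩ Z' ∧ s e ∈ Zᶜ ∩ Z'ᶜ)) →
      e = ef := by
    intro e he
    rw [← Set.mem_singleton_iff, ← hef, memCrossIn]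
    simp only [Set.mem_inter_iff, Set.mem_compl_iff] at he
    rcases he with ⟨⟨h1, h2⟩, h3, h4⟩ | ⟨⟨h1, h2⟩, h3, h4⟩
    · exact ⟨Or.inl ⟨h2, h4⟩, h1, h3⟩
    · exact ⟨Or.inr ⟨h2, h4⟩, h3, h1⟩
  have hcrossF' : ∀ e, ((s e ∈ Zᶜ ∩ Z'ᶜ ∧ t e ∈ Zᶜ ∩ Z') ∨ (t e ∈ Zᶜ ∩ Z'ᶜ ∧ s e ∈ Zᶜ ∩ Z')) →
      e = ef := by
    rintro e (⟨h1, h2⟩ | ⟨h1, h2⟩)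
    · exact hcrossF e (Or.inr ⟨h2, h1⟩)
    · exact hcrossF e (Or.inl ⟨h2, h1⟩)
  have hcrossF0 : (s ef ∈ Zᶜ ∩ Z' ∧ t ef ∈ Zᶜ ∩ Z'ᶜ) ∨ (t ef ∈ Zᶜ ∩ Z' ∧ s ef ∈ Zᶜ ∩ Z'ᶜ) := by
    rcases hefOr with ⟨h1, h2⟩ | ⟨h1, h2⟩
    · exact Or.inl ⟨⟨hefS, h1⟩, hefT, h2⟩
    · exact Or.inr ⟨⟨hefT, h1⟩, hefS, h2⟩
  have hcrossF0' : (s ef ∈ Zᶜ ∩ Z'ᶜ ∧ t ef ∈ Zᶜ ∩ Z') ∨ (t ef ∈ Zᶜ ∩ Z'ᶜ ∧ s ef ∈ Zᶜ ∩ Z') := by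
    rcases hcrossF0 with ⟨h1, h2⟩ | ⟨h1, h2⟩
    · exact Or.inr ⟨h2, h1⟩
    · exact Or.inl ⟨h2, h1⟩
  have hconnZcZ' : ConnOn s t (Zᶜ ∩ Z') := by
    refine connOn_split s t hdisj2 ?_ ef hcrossF hcrossF0
    rw [hsetZc]; exact hZcconn
  have hconnZcZ'c : ConnOn s t (Zᶜ ∩ Z'ᶜ) := by
    refine connOn_split s t hdisj2' ?_ ef hcrossF' hcrossF0'
    rw [hsetZc']; exact hZcconn
  -- connectivity: the complement of the intersection
  have hsetIc : Z'ᶜ ∪ (Zᶜ ∩ Z') = (Z ∩ Z')ᶜ := by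
    ext x; by_cases h1 : x ∈ Z <;> by_cases h2 : x ∈ Z' <;> simp [h1, h2]
  have hconnInterC : ConnOn s t (Z ∩ Z')ᶜ := by
    rw [← hsetIc]
    refine connOn_union s t hZ'cconn hconnZcZ' ef ?_
    rcases hefOr with ⟨h1, h2⟩ | ⟨h1, h2⟩
    · exact Or.inr ⟨h2, hefS, h1⟩
    · exact Or.inl ⟨h2, hefT, h1⟩
  -- connectivity: the union
  have hsetU : Z ∪ (Zᶜ ∩ Z') = Z ∪ Z' := by
    ext x; by_cases h1 : x ∈ Z <;> by_cases h2 : x ∈ Z' <;> simp [h1, h2]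
  have hconnUnion : ConnOn s t (Z ∪ Z') := by
    rw [← hsetU]
    refine connOn_union s t hZconn hconnZcZ' eb ?_
    rcases hebOr with ⟨h1, h2⟩ | ⟨h1, h2⟩
    · exact Or.inl ⟨h1, h2, hebT⟩
    · exact Or.inr ⟨h1, h2, hebS⟩
  have hsetUc : (Z ∪ Z')ᶜ = Zᶜ ∩ Z'ᶜ := Set.compl_union Z Z'
  have hconnUnionC : ConnOn s t (Z ∪ Z')ᶜ := by
    rw [hsetUc]; exact hconnZcZ'c
  -- subcurve conditions
  have hsubInter : Subcurve (Z ∩ Z') := by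
    refine ⟨⟨p1, hp1Z, hp1Z'⟩, fun h => hZnu ?_⟩
    exact Set.univ_subset_iff.mp (h ▸ Set.inter_subset_left)
  have hsubUnion : Subcurve (Z ∪ Z') := ⟨⟨p1, Or.inl hp1Z⟩, hun⟩
  exact ⟨⟨⟨hsubInter, hconnInter, hconnInterC⟩, hkInter⟩,
    ⟨⟨hsubUnion, hconnUnion, hconnUnionC⟩, hkUnion⟩⟩
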